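/- arXiv:2003.13639 — 4 statements merged into one kernel-verified Lean document; each statement's English description precedes it below -/
import Mathlib

section
/- Let $\ket{\psi} = \sum_{i=1}^{d^k} \alpha_i \ket{x^i_1 \cdots x^i_N}$ be a $k$-uniform state of $N$ qudits with minimal support $d^k$ (all $\alpha_i \neq 0$). Then for any two distinct indices $i \neq j$, the computational-basis strings $(x^i_1,\dots,x^i_N)$ and $(x^j_1,\dots,x^j_N)$ coincide in at most $k-1$ positions. -/
/-- Combine an assignment on `S` and on its complement into a full assignment. -/
def mergeFn {N : ℕ} {A : Type*} (S : Finset (Fin N)) (a : {i // i ∈ S} → A)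
    (g : {i // i ∉ S} → A) : Fin N → A :=
  fun i => if h : i ∈ S then a ⟨i, h⟩ else g ⟨i, h⟩

/-- The reduced density matrix of a pure state `ψ` on the subsystem `S`. -/
noncomputable def reducedMatrix {N d : ℕ} (ψ : (Fin N → Fin d) → ℂ) (S : Finset (Fin N)) :
    Matrix ({i // i ∈ S} → Fin d) ({i // i ∈ S} → Fin d) ℂ :=
  fun a b => ∑ g : {i // i ∉ S} → Fin d,
    ψ (mergeFn S a g) * star (ψ (mergeFn S b g))

/-- A state is `k`-uniform if every reduction to `k` parties is proportional to the identity. -/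
def IsUniform {N d : ℕ} (k : ℕ) (ψ : (Fin N → Fin d) → ℂ) : Prop :=
  ∀ S : Finset (Fin N), S.card = k →
    ∃ c : ℂ, reducedMatrix ψ S = c • (1 : Matrix _ _ ℂ)


/-- In a `k`-uniform state with minimal support `d^k`, any two distinct support strings
coincide in at most `k-1` positions. -/
theorem support_strings_coincide_le {N d k : ℕ} (hk : k ≤ N)
    (α : Fin (d ^ k) → ℂ) (x : Fin (d ^ k) → Fin N → Fin d)
    (hx : Function.Injective x) (hα : ∀ i, α i ≠ 0)
    (h : IsUniform k (fun f => ∑ i, if f = x i then α i else 0)) :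
    ∀ i j, i ≠ j →
      (Finset.univ.filter (fun m => x i m = x j m)).card ≤ k - 1 := by
  intro i j hij
  by_contra hcard
  set ψ : (Fin N → Fin d) → ℂ := fun f => ∑ l, if f = x l then α l else 0 with hψ
  have hdk2 : 2 ≤ d ^ k := by
    by_contra h2
    exact hij (by apply Fin.ext; have hi := i.isLt; have hj := j.isLt; omega)
  have hk1 : 1 ≤ k := by
    rcases Nat.eq_zero_or_pos k with h0 | hpos
    · rw [h0] at hdk2; simp at hdk2
    · exact hpos
  have hT : k ≤ (Finset.univ.filter (fun m => x i m = x j m)).card := by omega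
  obtain ⟨S, hSsub, hScard⟩ := Finset.exists_subset_card_eq hT
  obtain ⟨c, hc⟩ := h S hScard
  set r : Fin (d ^ k) → ({m // m ∈ S} → Fin d) := fun l m => x l m.1 with hr
  have hrij : r i = r j := by
    funext m
    have hm := hSsub m.2
    simpa using (Finset.mem_filter.mp hm).2
  have hr_not_inj : ¬ Function.Injective r := fun h' => hij (h' hrij)
  have hcardfun : Fintype.card ({m // m ∈ S} → Fin d) = d ^ k := by
    rw [Fintype.card_fun]
    simp [hScard]
  have hr_not_surj : ¬ Function.Surjective r := by
    intro hs
    exact hr_not_inj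
      (((Fintype.bijective_iff_surjective_and_card r).2 ⟨hs, by simp [hcardfun]⟩).1)
  obtain ⟨a', ha'⟩ := not_forall.mp (fun hall => hr_not_surj (fun a => hall a))
  rw [not_exists] at ha'
  have hpsi_x : ∀ l, ψ (x l) = α l := by
    intro l
    show (∑ b, if x l = x b then α b else 0) = α l
    rw [Finset.sum_eq_single l]
    · simp
    · intro b _ hbl
      have hne : x l ≠ x b := fun hh => hbl (hx hh).symm
      simp [hne]
    · simp
  have hpsi_zero : ∀ f, (∀ l, f ≠ x l) → ψ f = 0 := by
    intro f hf
    show (∑ l, if f = x l then α l else 0) = 0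
    exact Finset.sum_eq_zero (fun l _ => by simp [hf l])
  have hDa' : reducedMatrix ψ S a' a' = 0 := by
    unfold reducedMatrix
    apply Finset.sum_eq_zero
    intro g _
    have hz : ψ (mergeFn S a' g) = 0 := by
      apply hpsi_zero
      intro l hl
      apply ha' l
      funext m
      have hm : mergeFn S a' g m.1 = x l m.1 := by rw [hl]
      simpa [mergeFn, m.2] using hm.symm
    simp [hz]
  have hc0 : c = 0 := by
    have hce := congrFun (congrFun hc a') a'
    rw [hDa'] at hce
    simpa [Matrix.one_apply] using hce.symm
  have hDi : reducedMatrix ψ S (r i) (r i) = 0 := by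
    have hce := congrFun (congrFun hc (r i)) (r i)
    rw [hce, hc0]
    simp
  set g₀ : {m // m ∉ S} → Fin d := fun m => x i m.1 with hg₀
  have hmerge : mergeFn S (r i) g₀ = x i := by
    funext m
    unfold mergeFn
    split <;> rfl
  have hsum : reducedMatrix ψ S (r i) (r i)
      = ((∑ g : {m // m ∉ S} → Fin d, Complex.normSq (ψ (mergeFn S (r i) g))) : ℝ) := by
    unfold reducedMatrix
    push_cast
    apply Finset.sum_congr rfl
    intro g _
    rw [← Complex.mul_conj]
    rfl
  have hzero : ∑ g : {m // m ∉ S} → Fin d, Complex.normSq (ψ (mergeFn S (r i) g)) = 0 := by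
    have hDi' := hDi
    rw [hsum] at hDi'
    exact_mod_cast hDi'
  have hterm : Complex.normSq (ψ (mergeFn S (r i) g₀)) = 0 := by
    have hnn : ∀ g ∈ Finset.univ, 0 ≤ Complex.normSq (ψ (mergeFn S (r i) g)) :=
      fun g _ => Complex.normSq_nonneg _
    exact (Finset.sum_eq_zero_iff_of_nonneg hnn).1 hzero g₀ (Finset.mem_univ _)
  rw [hmerge, hpsi_x] at hterm
  exact hα i (Complex.normSq_eq_zero.mp hterm)
end

section
/- If $L : [d]^k \to [d]^k$ is a $k$-mutually orthogonal Latin hypercube and $L$ maps a combinatorial rectangle $S_1 \times \cdots \times S_k$ onto another combinatorial rectangle $S_1' \times \cdots \times S_k'$ (with all $S_i, S_i'$ nonempty), then all the sets $S_1,\dots,S_k,S_1',\dots,S_k'$ have the same cardinality. -/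
/-- A `k`-mutually orthogonal Latin hypercube of size `d`: a bijection `L : [d]^k → [d]^k`
such that for every choice of fixed coordinates `F` with values `g` (defining a slice of
the input cube) and every set `S'` of output coordinates with `|F| + |S'| = k`, the map
from the slice to the projection onto `S'` is a bijection. -/
def IsMOLH (d k : ℕ) (L : (Fin k → Fin d) → (Fin k → Fin d)) : Prop :=
  Function.Bijective L ∧
  ∀ (F : Finset (Fin k)) (g : Fin k → Fin d) (S' : Finset (Fin k)),
    F.card + S'.card = k →
    Function.Bijective
      (fun x : {f : Fin k → Fin d // ∀ i ∈ F, f i = g i} =>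
        (fun i : {i // i ∈ S'} => L x.1 i.1))

/-- If a `k`-MOLH maps a nonempty combinatorial rectangle onto a combinatorial rectangle,
then all the factor sets have the same cardinality. -/
theorem molh_rectangle_to_cube {d k : ℕ}
    (L : (Fin k → Fin d) → (Fin k → Fin d)) (h : IsMOLH d k L)
    (S S' : Fin k → Finset (Fin d))
    (hS : ∀ i, (S i).Nonempty) (hS' : ∀ i, (S' i).Nonempty)
    (him : L '' {f : Fin k → Fin d | ∀ i, f i ∈ S i} =
      {f : Fin k → Fin d | ∀ i, f i ∈ S' i}) :
    ∃ c : ℕ, (∀ i, (S i).card = c) ∧ (∀ i, (S' i).card = c) := by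
  classical
  rcases Nat.eq_zero_or_pos k with hk | hk
  · subst hk
    exact ⟨0, fun i => i.elim0, fun i => i.elim0⟩
  -- choose a base point in the rectangle
  choose f hf using hS
  -- Fact A: |S j| ≤ |S' m| for all j m
  have factA : ∀ j m : Fin k, (S j).card ≤ (S' m).card := by
    intro j m
    apply Finset.card_le_card_of_injOn (fun a => L (Function.update f j a) m)
    · intro a ha
      have hmem : Function.update f j a ∈ {g : Fin k → Fin d | ∀ i, g i ∈ S i} := by
        intro i
        rcases eq_or_ne i j with rfl | hij
        · simpa using ha
        · simp [Function.update_of_ne hij, hf]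
      have : L (Function.update f j a) ∈ {g : Fin k → Fin d | ∀ i, g i ∈ S' i} := by
        rw [← him]; exact ⟨_, hmem, rfl⟩
      exact this m
    · intro a _ b _ hab
      have hcard : ({j}ᶜ : Finset (Fin k)).card + ({m} : Finset (Fin k)).card = k := by
        simp [Finset.card_compl]
        omega
      have hbij := (h.2 {j}ᶜ f {m} hcard).1
      have pa : ∀ i ∈ ({j}ᶜ : Finset (Fin k)), Function.update f j a i = f i := by
        intro i hi
        exact Function.update_of_ne (by simpa using hi) _ _
      have pb : ∀ i ∈ ({j}ᶜ : Finset (Fin k)), Function.update f j b i = f i := by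
        intro i hi
        exact Function.update_of_ne (by simpa using hi) _ _
      have := hbij (a₁ := ⟨Function.update f j a, pa⟩) (a₂ := ⟨Function.update f j b, pb⟩)
        (by
          funext i
          rcases i with ⟨i, hi⟩
          have : i = m := by simpa using hi
          subst this
          exact hab)
      have h2 : Function.update f j a = Function.update f j b := congrArg Subtype.val this
      have := congrFun h2 j
      simpa using this
  -- Fact B: products of cards are equal
  have factB : ∏ i, (S i).card = ∏ i, (S' i).card := by
    have h1 : (Fintype.piFinset S).image L = Fintype.piFinset S' := by
      apply Finset.coe_injective
      rw [Finset.coe_image, Fintype.coe_piFinset, Fintype.coe_piFinset]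
      convert him using 2 <;> ext g <;> simp [Set.mem_univ_pi]
    have h2 : ((Fintype.piFinset S).image L).card = (Fintype.piFinset S).card :=
      Finset.card_image_of_injective _ h.1.1
    rw [h1] at h2
    rw [← Fintype.card_piFinset, ← Fintype.card_piFinset, h2]
  -- pick a minimizing output coordinate
  obtain ⟨m0, -, hm0⟩ := Finset.exists_min_image Finset.univ (fun m => (S' m).card)
    ⟨⟨0, hk⟩, Finset.mem_univ _⟩
  set c := (S' m0).card with hc
  have hcpos : 0 < c := Finset.card_pos.2 (hS' m0)
  have hle : ∀ j, (S j).card ≤ c := fun j => factA j m0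
  have hge : ∀ m, c ≤ (S' m).card := fun m => hm0 m (Finset.mem_univ m)
  have hspos : ∀ j, 0 < (S j).card := fun j => Finset.card_pos.2 ⟨f j, hf j⟩
  have hck : (∏ _i : Fin k, c) = c ^ k := by simp
  refine ⟨c, ?_, ?_⟩
  · intro j
    by_contra hne
    have hjlt : (S j).card < c := lt_of_le_of_ne (hle j) hne
    have h1 : ∏ i, (S i).card < ∏ _i : Fin k, c :=
      Finset.prod_lt_prod (fun i _ => hspos i) (fun i _ => hle i)
        ⟨j, Finset.mem_univ j, hjlt⟩
    have h2 : (∏ _i : Fin k, c) ≤ ∏ i, (S' i).card :=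
      Finset.prod_le_prod (fun i _ => Nat.zero_le _) (fun i _ => hge i)
    omega
  · intro m
    by_contra hne
    have hmlt : c < (S' m).card := lt_of_le_of_ne (hge m) (Ne.symm hne)
    have h1 : (∏ _i : Fin k, c) < ∏ i, (S' i).card :=
      Finset.prod_lt_prod (fun i _ => hcpos) (fun i _ => hge i)
        ⟨m, Finset.mem_univ m, hmlt⟩
    have h2 : ∏ i, (S i).card ≤ ∏ _i : Fin k, c :=
      Finset.prod_le_prod (fun i _ => Nat.zero_le _) (fun i _ => hle i)
    omega
end

section
/- For any $N \ge 2$ and $d \ge 2$, every $1$-uniform state of $N$ qudits with minimal support $d$ is LU-equivalent to the generalized GHZ state $\frac{1}{\sqrt{d}}\sum_{i=0}^{d-1}\ket{i,\dots,i}$. That is, if $\ket{\psi} = \frac{1}{\sqrt{d}}\sum_{i=0}^{d-1}\omega_i \ket{j^1_i,\dots,j^N_i}$ with $|\omega_i| = 1$, where for each position $\ell$ the map $i \mapsto j^\ell_i$ is a bijection of $\{0,\dots,d-1\}$, then there exist unitaries $U_1,\dots,U_N$ on $\mathbb{C}^d$ with $(U_1\otimes\cdots\otimes U_N)\ket{\psi}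 = \ket{\mathrm{GHZ}_d^N}$. -/
/-- Every `1`-uniform state of `N` qudits with minimal support `d`, i.e.
`ψ = (1/√d) ∑ᵢ ωᵢ |j¹ᵢ,…,jᴺᵢ⟩` with unimodular phases `ωᵢ` and each local map
`i ↦ jℓᵢ` a bijection, is LU-equivalent to the generalized GHZ state
`(1/√d) ∑ᵢ |i,…,i⟩`. -/
theorem one_uniform_minimal_LU_GHZ {N d : ℕ} (hN : 2 ≤ N) (hd : 2 ≤ d)
    (ω : Fin d → ℂ) (hω : ∀ i, ‖ω i‖ = 1)
    (b : Fin N → Equiv.Perm (Fin d)) :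
    ∃ U : Fin N → Matrix (Fin d) (Fin d) ℂ,
      (∀ ℓ, U ℓ ∈ Matrix.unitaryGroup (Fin d) ℂ) ∧
      ∀ f : Fin N → Fin d,
        (∑ g : Fin N → Fin d, (∏ ℓ, U ℓ (f ℓ) (g ℓ)) *
          (((Real.sqrt d : ℂ))⁻¹ *
            ∑ i : Fin d, if (∀ ℓ, g ℓ = b ℓ i) then ω i else 0)) =
        ((Real.sqrt d : ℂ))⁻¹ *
          ∑ i : Fin d, if (∀ ℓ, f ℓ = i) then 1 else 0 := by
  classical
  set z : Fin N := ⟨0, by omega⟩ with hz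
  set c : Fin N → Fin d → ℂ := fun ℓ x => if ℓ = z then (ω x)⁻¹ else 1 with hc
  have hωne : ∀ i, ω i ≠ 0 := by
    intro i h
    simpa [h] using hω i
  have hcnorm : ∀ ℓ x, ‖c ℓ x‖ = 1 := by
    intro ℓ x
    by_cases h : ℓ = z <;> simp [hc, h, hω x]
  have hcprod : ∀ x : Fin d, (∏ ℓ, c ℓ x) = (ω x)⁻¹ := by
    intro x
    rw [Finset.prod_eq_single z (by intro ℓ _ h; simp [hc, h]) (by simp)]
    simp [hc]
  refine ⟨fun ℓ => Matrix.of fun x y => if y = b ℓ x then c ℓ x else 0, ?_, ?_⟩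
  · intro ℓ
    rw [Matrix.mem_unitaryGroup_iff]
    ext x y
    simp only [Matrix.mul_apply, Matrix.star_apply, Matrix.of_apply, Matrix.one_apply]
    rw [Finset.sum_eq_single (b ℓ x)]
    · by_cases h : x = y
      · subst h
        have : (c ℓ x) * star (c ℓ x) = 1 := by
          rw [mul_comm, RCLike.star_def, Complex.conj_mul']
          norm_cast
          simp [hcnorm ℓ x]
        simpa using this
      · have hb : (b ℓ) x ≠ (b ℓ) y := fun hxy => h ((b ℓ).injective hxy)
        simp [h, Ne.symm hb]
    · intro k _ hk
      simp [hk]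
    · simp
  · intro f
    have hswap :
        (∑ g : Fin N → Fin d, (∏ ℓ, (Matrix.of fun x y => if y = b ℓ x then c ℓ x else 0) (f ℓ) (g ℓ)) *
          (((Real.sqrt d : ℂ))⁻¹ *
            ∑ i : Fin d, if (∀ ℓ, g ℓ = b ℓ i) then ω i else 0)) =
        ∑ i : Fin d, ∑ g : Fin N → Fin d,
          if g = (fun ℓ => b ℓ i) then
            (∏ ℓ, (Matrix.of fun x y => if y = b ℓ x then c ℓ x else 0) (f ℓ) (g ℓ)) *
              (((Real.sqrt d : ℂ))⁻¹ * ω i) else 0 := by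
      rw [Finset.sum_comm]
      refine Finset.sum_congr rfl fun g _ => ?_
      rw [Finset.mul_sum, Finset.mul_sum]
      refine Finset.sum_congr rfl fun i _ => ?_
      have : (∀ ℓ, g ℓ = b ℓ i) ↔ g = (fun ℓ => b ℓ i) := by
        constructor
        · intro h; funext ℓ; exact h ℓ
        · intro h ℓ; rw [h]
      by_cases h : ∀ ℓ, g ℓ = b ℓ i
      · rw [if_pos h, if_pos (this.mp h)]
      · rw [if_neg h, if_neg (fun he => h (this.mpr he)), mul_zero, mul_zero]
    rw [hswap, Finset.mul_sum]
    refine Finset.sum_congr rfl fun i _ => ?_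
    rw [Finset.sum_ite_eq' Finset.univ (fun ℓ => b ℓ i)]
    simp only [Finset.mem_univ, if_true, Matrix.of_apply]
    by_cases h : ∀ ℓ, f ℓ = i
    · have : (∏ ℓ, if b ℓ i = b ℓ (f ℓ) then c ℓ (f ℓ) else 0) = (ω i)⁻¹ := by
        rw [show (∏ ℓ, if b ℓ i = b ℓ (f ℓ) then c ℓ (f ℓ) else 0) = ∏ ℓ, c ℓ i from
          Finset.prod_congr rfl fun ℓ _ => by simp [h ℓ], hcprod i]
      rw [this]
      simp only [h, if_pos, forall_const]
      rw [if_pos (fun _ => trivial), mul_one, mul_comm ((Real.sqrt d : ℂ))⁻¹ (ω i),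
        ← mul_assoc, inv_mul_cancel₀ (hωne i), one_mul]
    · push_neg at h
      obtain ⟨ℓ₀, hℓ₀⟩ := h
      have hfac : (if b ℓ₀ i = b ℓ₀ (f ℓ₀) then c ℓ₀ (f ℓ₀) else 0) = 0 := by
        rw [if_neg]
        intro hb
        exact hℓ₀ ((b ℓ₀).injective hb).symm
      rw [Finset.prod_eq_zero (Finset.mem_univ ℓ₀) hfac]
      have : ¬ ∀ ℓ, f ℓ = i := fun h => hℓ₀ (h ℓ₀)
      simp [this]
end

section
/- The four-fold tensor power of the $3 \times 3$ Fourier matrix $F_3 = \frac{1}{\sqrt{3}}\begin{pmatrix}1&1&1\\1&\omega&\bar\omega\\1&\bar\omega&\omega\end{pmatrix}$ (with $\omega = e^{2\pi i/3}$) maps the state $\ket{\mathrm{AME}(4,3)} = \frac{1}{3}\sum_{i,j=0}^{2}\ket{i,j,i+j,2i+j}$ (addition mod 3) to itself, up to a global phase. -/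
/-- The `3 × 3` Fourier matrix `(F₃)ⱼₖ = ωʲᵏ/√3` with `ω = e^{2πi/3}`. -/
noncomputable def F3 : Matrix (ZMod 3) (ZMod 3) ℂ :=
  fun j k => Complex.exp (2 * Real.pi * Complex.I / 3) ^ (j.val * k.val) / Real.sqrt 3

/-- The AME(4,3) state `(1/3) ∑_{i,j} |i, j, i+j, 2i+j⟩` (arithmetic mod 3). -/
noncomputable def ame43 : (Fin 4 → ZMod 3) → ℂ :=
  fun f => (1 / 3 : ℂ) * ∑ i : ZMod 3, ∑ j : ZMod 3,
    if f 0 = i ∧ f 1 = j ∧ f 2 = i + j ∧ f 3 = 2 * i + j then 1 else 0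

noncomputable def ω : ℂ := Complex.exp (2 * Real.pi * Complex.I / 3)

noncomputable def χ : ZMod 3 → ℂ := fun x => ω ^ x.val

lemma hω3 : ω ^ 3 = 1 := by
  unfold ω
  rw [← Complex.exp_nat_mul]
  push_cast
  have : (3 : ℂ) * (2 * Real.pi * Complex.I / 3) = 2 * Real.pi * Complex.I := by ring
  rw [this, Complex.exp_two_pi_mul_I]

lemma hωmod (n : ℕ) : ω ^ n = ω ^ (n % 3) := by
  conv_lhs => rw [← Nat.div_add_mod n 3]
  rw [pow_add, pow_mul, hω3, one_pow, one_mul]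

lemma χ_mul (a b : ZMod 3) : ω ^ (a.val * b.val) = χ (a * b) := by
  unfold χ
  rw [ZMod.val_mul, ← hωmod]

lemma χ_add (a b : ZMod 3) : χ (a + b) = χ a * χ b := by
  unfold χ
  rw [← pow_add, ZMod.val_add, ← hωmod]

lemma hωne : ω ≠ 1 := by
  intro h
  rw [ω, Complex.exp_eq_one_iff] at h
  obtain ⟨n, hn⟩ := h
  have hpi : (Real.pi : ℂ) ≠ 0 := by exact_mod_cast Real.pi_ne_zero
  have h2 : (2 * (Real.pi : ℂ) * Complex.I) ≠ 0 := by
    simp [hpi, Complex.I_ne_zero]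
  have h3 : (2 * (Real.pi : ℂ) * Complex.I) * (1/3) = (2 * (Real.pi : ℂ) * Complex.I) * n := by
    linear_combination hn
  have h4 : (1/3 : ℂ) = n := mul_left_cancel₀ h2 h3
  have h5 : (3 * n : ℂ) = 1 := by rw [← h4]; ring
  have h6 : (3 * n : ℤ) = 1 := by exact_mod_cast h5
  omega

lemma hωsum : 1 + ω + ω ^ 2 = 0 := by
  have h : (ω - 1) * (1 + ω + ω ^ 2) = 0 := by linear_combination hω3
  rcases mul_eq_zero.mp h with h | h
  · exact absurd (sub_eq_zero.mp h) hωne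
  · exact h

lemma sum3 (g : ZMod 3 → ℂ) : ∑ x : ZMod 3, g x = g 0 + g 1 + g 2 := by
  rw [show (Finset.univ : Finset (ZMod 3)) = {0, 1, 2} from by decide]
  rw [Finset.sum_insert (by decide), Finset.sum_insert (by decide), Finset.sum_singleton]
  ring

lemma sumχ (a : ZMod 3) : ∑ i : ZMod 3, χ (i * a) = if a = 0 then 3 else 0 := by
  have ha : ∀ x : ZMod 3, x = 0 ∨ x = 1 ∨ x = 2 := by decide
  rcases ha a with rfl | rfl | rfl
  · rw [sum3]
    norm_num [χ, show ((0 : ZMod 3)).val = 0 from rfl]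
  · rw [sum3, show (0 : ZMod 3) * 1 = 0 from rfl, show (1 : ZMod 3) * 1 = 1 from rfl,
      show (2 : ZMod 3) * 1 = 2 from rfl, if_neg (by decide : ¬ (1 : ZMod 3) = 0)]
    unfold χ
    rw [show ((0 : ZMod 3)).val = 0 from rfl, show ((1 : ZMod 3)).val = 1 from rfl,
      show ((2 : ZMod 3)).val = 2 from rfl]
    linear_combination hωsum
  · rw [sum3, show (0 : ZMod 3) * 2 = 0 from rfl, show (1 : ZMod 3) * 2 = 2 from rfl,
      show (2 : ZMod 3) * 2 = 1 from rfl, if_neg (by decide : ¬ (2 : ZMod 3) = 0)]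
    unfold χ
    rw [show ((0 : ZMod 3)).val = 0 from rfl, show ((1 : ZMod 3)).val = 1 from rfl,
      show ((2 : ZMod 3)).val = 2 from rfl]
    linear_combination hωsum

lemma F3_eq (a b : ZMod 3) : F3 a b = χ (a * b) / Real.sqrt 3 := by
  unfold F3
  rw [show Complex.exp (2 * Real.pi * Complex.I / 3) = ω from rfl, χ_mul]

lemma hv (g : Fin 4 → ZMod 3) (i j : ZMod 3) :
    (g 0 = i ∧ g 1 = j ∧ g 2 = i + j ∧ g 3 = 2 * i + j) ↔ g = ![i, j, i + j, 2 * i + j] := by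
  constructor
  · rintro ⟨h0, h1, h2, h3⟩
    funext ℓ
    fin_cases ℓ <;> simp_all
  · rintro rfl
    simp

lemma hame (h : Fin 4 → ZMod 3) :
    ame43 h = (1 / 3 : ℂ) * (if h 2 = h 0 + h 1 ∧ h 3 = 2 * h 0 + h 1 then 1 else 0) := by
  unfold ame43
  congr 1
  rw [Finset.sum_eq_single (h 0)]
  · rw [Finset.sum_eq_single (h 1)]
    · by_cases hc : h 2 = h 0 + h 1 ∧ h 3 = 2 * h 0 + h 1 <;> simp [hc]
    · intro b _ hb
      rw [if_neg]
      rintro ⟨-, hb', -⟩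
      exact hb hb'.symm
    · simp
  · intro b _ hb
    apply Finset.sum_eq_zero
    intro j _
    rw [if_neg]
    rintro ⟨hb', -⟩
    exact hb hb'.symm
  · simp

/-- `F₃^{⊗4}` maps the AME(4,3) state to itself up to a global phase. -/
theorem F3_pow4_preserves_ame43 :
    ∃ c : ℂ, ‖c‖ = 1 ∧ ∀ f : Fin 4 → ZMod 3,
      (∑ g : Fin 4 → ZMod 3, (∏ ℓ : Fin 4, F3 (f ℓ) (g ℓ)) * ame43 g) = c * ame43 f := by
  refine ⟨1, norm_one, fun f => ?_⟩
  have h9 : ((Real.sqrt 3 : ℝ) : ℂ) ^ 4 = 9 := by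
    have : Real.sqrt 3 ^ 4 = 9 := by
      rw [show (4 : ℕ) = 2 * 2 from rfl, pow_mul, Real.sq_sqrt (by norm_num : (0:ℝ) ≤ 3)]
      norm_num
    exact_mod_cast this
  have step1 : (∑ g : Fin 4 → ZMod 3, (∏ ℓ : Fin 4, F3 (f ℓ) (g ℓ)) * ame43 g)
      = (1 / 3 : ℂ) * ∑ i : ZMod 3, ∑ j : ZMod 3,
          ∏ ℓ : Fin 4, F3 (f ℓ) (![i, j, i + j, 2 * i + j] ℓ) := by
    simp only [ame43]
    simp_rw [hv, mul_left_comm _ ((1 : ℂ) / 3) _]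
    rw [← Finset.mul_sum]
    congr 1
    simp_rw [Finset.mul_sum, mul_ite, mul_one, mul_zero]
    rw [Finset.sum_comm]
    apply Finset.sum_congr rfl
    intro i _
    rw [Finset.sum_comm]
    apply Finset.sum_congr rfl
    intro j _
    simp [Finset.sum_ite_eq']
  have hprod : ∀ i j : ZMod 3, (∏ ℓ : Fin 4, F3 (f ℓ) (![i, j, i + j, 2 * i + j] ℓ))
      = χ (i * (f 0 + f 2 + 2 * f 3)) * χ (j * (f 1 + f 2 + f 3)) / 9 := by
    intro i j
    rw [Fin.prod_univ_four]
    simp only [Matrix.cons_val_zero, Matrix.cons_val_one, Matrix.head_cons,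
      Matrix.cons_val_two, Matrix.tail_cons, Matrix.cons_val_three]
    rw [F3_eq, F3_eq, F3_eq, F3_eq, div_mul_div_comm, div_mul_div_comm, div_mul_div_comm,
      ← χ_add, ← χ_add, ← χ_add, ← χ_add]
    congr 1
    · congr 1
      ring
    · linear_combination h9
  rw [step1]
  simp_rw [hprod, mul_div_assoc, ← Finset.mul_sum]
  rw [← Finset.sum_mul, ← Finset.sum_div, sumχ, sumχ, hame]
  have hiff : (f 2 = f 0 + f 1 ∧ f 3 = 2 * f 0 + f 1)
      ↔ (f 0 + f 2 + 2 * f 3 = 0 ∧ f 1 + f 2 + f 3 = 0) := by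
    have : ∀ a b c d : ZMod 3,
        (c = a + b ∧ d = 2 * a + b) ↔ (a + c + 2 * d = 0 ∧ b + c + d = 0) := by decide
    exact this (f 0) (f 1) (f 2) (f 3)
  by_cases h1 : f 0 + f 2 + 2 * f 3 = 0 <;> by_cases h2 : f 1 + f 2 + f 3 = 0 <;>
    simp [h1, h2, hiff] <;> norm_num
end
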